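/- (Privacy core: evaluation isomorphism on the noise subspace.) Let F be a field, let α : Fin (l+t) → F be injective, and let γ : Fin t → F be injective with range disjoint from the range of α. Let V be the F-subspace of F[X] consisting of polynomials q of degree at most l + t − 1 satisfying q(α o) = 0 for every o < l. Then the F-linear evaluation map V → (Fin t → F), q ↦ (q(γ j))_{j ∈ Fin t}, is bijective. -/

import Mathlib

/-- Privacy core: evaluation at the `t` collusion points is a bijection from the space of
polynomials of degree at most `l + t − 1` vanishing at the first `l` nodes onto `Fin t → F`. -/
theorem evaluation_bijective_on_noise_subspace
    {F : Type*} [Field F] {l t : ℕ}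
    (hl : 1 ≤ l) (ht : 1 ≤ t)
    (α : Fin (l + t) → F) (hα : Function.Injective α)
    (γ : Fin t → F) (hγ : Function.Injective γ)
    (hdisj : Disjoint (Set.range γ) (Set.range α)) :
    Function.Bijective
      (fun (q : (Polynomial.degreeLE F ((l + t - 1 : ℕ) : WithBot ℕ) ⊓
          ⨅ o : Fin l, LinearMap.ker (Polynomial.leval (α (Fin.castAdd t o))) :
            Submodule F (Polynomial F)))
        (j : Fin t) => Polynomial.eval (γ j) (q : Polynomial F)) := by
  classical
  have hne : ∀ (j : Fin t) (o : Fin l), γ j ≠ α (Fin.castAdd t o) := by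
    intro j o h
    exact (Set.disjoint_left.mp hdisj ⟨j, rfl⟩) ⟨_, h.symm⟩
  constructor
  · -- injectivity
    rintro ⟨q₁, hq₁⟩ ⟨q₂, hq₂⟩ h
    simp only [Subtype.mk.injEq]
    have hmem : q₁ - q₂ ∈ (Polynomial.degreeLE F ((l + t - 1 : ℕ) : WithBot ℕ) ⊓
        ⨅ o : Fin l, LinearMap.ker (Polynomial.leval (α (Fin.castAdd t o))) :
          Submodule F (Polynomial F)) := Submodule.sub_mem _ hq₁ hq₂
    set d := q₁ - q₂ with hd
    have hdeg : d.degree ≤ ((l + t - 1 : ℕ) : WithBot ℕ) :=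
      Polynomial.mem_degreeLE.mp hmem.1
    have hα0 : ∀ o : Fin l, d.eval (α (Fin.castAdd t o)) = 0 := by
      intro o
      have := (Submodule.mem_iInf _).mp hmem.2 o
      simpa [Polynomial.leval_apply] using this
    have hγ0 : ∀ j : Fin t, d.eval (γ j) = 0 := by
      intro j
      have := congrFun h j
      simp only at this
      simp [hd, Polynomial.eval_sub, this]
    set f : Fin l ⊕ Fin t → F := Sum.elim (fun o => α (Fin.castAdd t o)) γ with hf
    have hfinj : Function.Injective f := by
      rintro (a | a) (b | b) hab
      · have h2 : Fin.castAdd t a = Fin.castAdd t b := hα (by simpa [hf] using hab)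
        exact congrArg Sum.inl ((Fin.strictMono_castAdd t).injective h2)
      · exact absurd ((by simpa [hf] using hab) : α _ = γ _).symm (hne b a)
      · exact absurd ((by simpa [hf] using hab) : γ _ = α _) (hne a b)
      · simpa using hγ (by simpa [hf] using hab)
    have heval : ∀ i, d.eval (f i) = 0 := by
      rintro (a | a)
      · exact hα0 a
      · exact hγ0 a
    have hdzero : d = 0 := by
      apply Polynomial.eq_zero_of_natDegree_lt_card_of_eval_eq_zero d hfinj heval
      have hcard : Fintype.card (Fin l ⊕ Fin t) = l + t := by simp
      rw [hcard]
      rcases eq_or_ne d 0 with h0 | h0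
      · simp [h0]; omega
      · have := (Polynomial.degree_eq_natDegree h0) ▸ hdeg
        have : d.natDegree ≤ l + t - 1 := by exact_mod_cast this
        omega
    exact sub_eq_zero.mp hdzero
  · -- surjectivity
    intro v
    set Z : Polynomial F :=
      ∏ o : Fin l, (Polynomial.X - Polynomial.C (α (Fin.castAdd t o))) with hZ
    have hZdeg : Z.degree = (l : WithBot ℕ) := by
      rw [hZ, Polynomial.degree_prod]
      simp [Polynomial.degree_X_sub_C]
    have hZγ : ∀ j : Fin t, Z.eval (γ j) ≠ 0 := by
      intro j
      rw [hZ, Polynomial.eval_prod]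
      refine Finset.prod_ne_zero_iff.mpr fun o _ => ?_
      simp only [Polynomial.eval_sub, Polynomial.eval_X, Polynomial.eval_C, sub_ne_zero]
      exact hne j o
    set p : Polynomial F :=
      Lagrange.interpolate Finset.univ γ (fun j => v j / Z.eval (γ j)) with hp
    have hpdeg : p.degree < (t : WithBot ℕ) := by
      have := Lagrange.degree_interpolate_lt (s := Finset.univ) (v := γ)
        (fun j => v j / Z.eval (γ j)) (Set.injOn_of_injective hγ)
      rw [Finset.card_univ, Fintype.card_fin] at this
      exact this
    set q : Polynomial F := Z * p with hq
    have hqdeg : q.degree ≤ ((l + t - 1 : ℕ) : WithBot ℕ) := by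
      rcases eq_or_ne q 0 with h0 | h0
      · simp [h0]
      have hqlt : q.degree < ((l + t : ℕ) : WithBot ℕ) := by
        rw [hq, Polynomial.degree_mul, hZdeg]
        have : ((l + t : ℕ) : WithBot ℕ) = (l : WithBot ℕ) + (t : WithBot ℕ) := by
          push_cast; ring
        rw [this]
        exact WithBot.add_lt_add_left (by simp) hpdeg
      rw [Polynomial.degree_eq_natDegree h0] at hqlt ⊢
      have : q.natDegree < l + t := by exact_mod_cast hqlt
      exact_mod_cast Nat.le_sub_one_of_lt this
    have hqmem : q ∈ (Polynomial.degreeLE F ((l + t - 1 : ℕ) : WithBot ℕ) ⊓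
        ⨅ o : Fin l, LinearMap.ker (Polynomial.leval (α (Fin.castAdd t o))) :
          Submodule F (Polynomial F)) := by
      refine ⟨Polynomial.mem_degreeLE.mpr hqdeg, (Submodule.mem_iInf _).mpr fun o => ?_⟩
      simp only [LinearMap.mem_ker, Polynomial.leval_apply, hq, Polynomial.eval_mul]
      have : Z.eval (α (Fin.castAdd t o)) = 0 := by
        rw [hZ, Polynomial.eval_prod]
        exact Finset.prod_eq_zero (Finset.mem_univ o) (by simp)
      rw [this, zero_mul]
    refine ⟨⟨q, hqmem⟩, ?_⟩
    funext j
    simp only [hq, Polynomial.eval_mul]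
    have := Lagrange.eval_interpolate_at_node (s := Finset.univ) (v := γ)
      (fun j => v j / Z.eval (γ j)) (Set.injOn_of_injective hγ) (Finset.mem_univ j)
    rw [hp, this]
    rw [mul_comm, div_mul_cancel₀ _ (hZγ j)]
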